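/- For every integer n ≥ 1 and every 0 ≤ j ≤ n, the j-th elementary symmetric polynomial evaluated at the Jucys–Murphy elements satisfies e_j(J_1,…,J_n) = Σ_{σ ∈ S_n, n − c(σ) = j} σ in ℂ[S_n], where c(σ) denotes the number of cycles of σ (fixed points counted as cycles). -/

import Mathlib

/-- The Jucys–Murphy element `J_b = ∑_{a < b} (a b)` in the group algebra `ℂ[S_n]`. -/
noncomputable def jucysMurphy (n : ℕ) (b : Fin n) : MonoidAlgebra ℂ (Equiv.Perm (Fin n)) :=
  ∑ a ∈ Finset.univ.filter (fun a : Fin n => a < b),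
    MonoidAlgebra.of ℂ (Equiv.Perm (Fin n)) (Equiv.swap a b)

/-- Evaluation of a multivariate polynomial at the Jucys–Murphy elements. -/
noncomputable def jmEval (n : ℕ) (f : MvPolynomial (Fin n) ℂ) :
    MonoidAlgebra ℂ (Equiv.Perm (Fin n)) :=
  ∑ m ∈ f.support, f.coeff m • (List.ofFn fun b : Fin n => jucysMurphy n b ^ m b).prod

/-- The total number of cycles of a permutation, fixed points counted as cycles. -/
def cyclesCount {n : ℕ} (σ : Equiv.Perm (Fin n)) : ℕ := (Equiv.Perm.partition σ).parts.card

open Equiv Equiv.Perm Finset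

variable {α : Type*} [Fintype α] [DecidableEq α]

private lemma ofFn_prod_one {M : Type*} [Monoid M] {n : ℕ} (f : Fin n → M)
    (h : ∀ i, f i = 1) : (List.ofFn f).prod = 1 := by
  apply List.prod_eq_one
  intro x hx
  obtain ⟨i, rfl⟩ := List.mem_ofFn.1 hx
  exact h i

private lemma isCycle_mul_swap {c : Equiv.Perm α} (hc : c.IsCycle) {a x : α}
    (ha : c a ≠ a) (hx : c x = x) (hax : a ≠ x) :
    (c * Equiv.swap a x).IsCycle ∧ (c * Equiv.swap a x).support = insert x c.support := by
  set g := c * Equiv.swap a x with hg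
  have hga : g a = x := by simp [hg, Equiv.swap_apply_left, hx]
  have hgx : g x = c a := by simp [hg, Equiv.swap_apply_right]
  have hcax : c a ≠ x := fun h => hax (c.injective (h.trans hx.symm))
  have hgy : ∀ y, y ≠ a → y ≠ x → g y = c y := fun y h1 h2 => by
    simp [hg, Equiv.swap_apply_of_ne_of_ne h1 h2]
  have hxsc : x ∉ c.support := by simp [Equiv.Perm.mem_support, hx]
  have hasc : a ∈ c.support := Equiv.Perm.mem_support.2 ha
  have key : ∀ k : ℕ, ∃ m : ℕ, (g ^ m) x = (c ^ (k + 1)) a := by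
    intro k
    induction k with
    | zero => exact ⟨1, by simpa [pow_one] using hgx⟩
    | succ k ih =>
      obtain ⟨m, hm⟩ := ih
      by_cases hy : (c ^ (k + 1)) a = a
      · refine ⟨1, ?_⟩
        rw [pow_one, hgx, pow_succ', Equiv.Perm.mul_apply, hy]
      · have hy1 : (c ^ (k + 1)) a ∈ c.support := Equiv.Perm.pow_apply_mem_support.2 hasc
        have hy2 : (c ^ (k + 1)) a ≠ x := fun h => hxsc (h ▸ hy1)
        refine ⟨m + 1, ?_⟩
        rw [pow_succ', Equiv.Perm.mul_apply, hm, hgy _ hy hy2, ← Equiv.Perm.mul_apply,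
          ← pow_succ']
  have sameCyc : ∀ y ∈ c.support, g.SameCycle x y := by
    intro y hy
    have hca : c (c a) ≠ c a := Equiv.Perm.mem_support.1 (Equiv.Perm.apply_mem_support.2 hasc)
    obtain ⟨i, hi⟩ := hc.exists_pow_eq hca (Equiv.Perm.mem_support.1 hy)
    obtain ⟨m, hm⟩ := key i
    refine ⟨(m : ℤ), ?_⟩
    rw [zpow_natCast, hm, pow_succ, Equiv.Perm.mul_apply, hi]
  have hsupp : g.support = insert x c.support := by
    ext y
    simp only [Equiv.Perm.mem_support, Finset.mem_insert]
    by_cases h1 : y = a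
    · subst h1
      simp only [hga]
      exact ⟨fun _ => Or.inr ha, fun _ => hax.symm⟩
    · by_cases h2 : y = x
      · subst h2
        simp only [hgx]
        exact ⟨fun _ => Or.inl (by trivial), fun _ => hcax⟩
      · rw [hgy y h1 h2]
        simp [h2]
  refine ⟨⟨x, by rw [hgx]; exact hcax, fun y hy => ?_⟩, hsupp⟩
  by_cases h1 : y = x
  · subst h1; exact Equiv.Perm.SameCycle.refl _ _
  · by_cases h2 : y = a
    · subst h2; exact sameCyc _ hasc
    · have : g y = c y := hgy y h2 h1
      exact sameCyc y (Equiv.Perm.mem_support.2 (by rwa [← this]))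

open Equiv Equiv.Perm Finset

variable {α : Type*} [Fintype α] [DecidableEq α]

private lemma cyclesAux (σ : Equiv.Perm α) :
    (Equiv.Perm.partition σ).parts.card
      = σ.cycleFactorsFinset.card + (Fintype.card α - σ.support.card) := by
  rw [Equiv.Perm.parts_partition, Multiset.card_add, Multiset.card_replicate,
    Equiv.Perm.cycleType_def, Multiset.card_map]
  rfl

private lemma two_mul_card_cf_le (σ : Equiv.Perm α) :
    2 * σ.cycleFactorsFinset.card ≤ σ.support.card := by
  have h := Equiv.Perm.sum_cycleType σ
  have h2 : 2 * Multiset.card σ.cycleType ≤ σ.cycleType.sum := by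
    rw [two_mul]
    calc Multiset.card σ.cycleType + Multiset.card σ.cycleType
        = Multiset.card σ.cycleType • 2 := by rw [smul_eq_mul]; ring
      _ ≤ σ.cycleType.sum := Multiset.card_nsmul_le_sum
          (fun x hx => Equiv.Perm.two_le_of_mem_cycleType hx)
  have h3 : Multiset.card σ.cycleType = σ.cycleFactorsFinset.card := by
    rw [Equiv.Perm.cycleType_def, Multiset.card_map]; rfl
  omega

private lemma cf_and_support_mul_swap {σ : Equiv.Perm α} {a x : α} (hx : σ x = x)
    (hax : a ≠ x) :
    (σ * Equiv.swap a x).cycleFactorsFinset.card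
        = σ.cycleFactorsFinset.card + (if σ a = a then 1 else 0) ∧
      (σ * Equiv.swap a x).support.card = σ.support.card + (if σ a = a then 2 else 1) := by
  by_cases ha : σ a = a
  · simp only [if_pos ha]
    have hd : σ.Disjoint (Equiv.swap a x) := by
      rw [Equiv.Perm.disjoint_iff_disjoint_support, Equiv.Perm.support_swap hax]
      simp [Finset.disjoint_insert_right, Finset.disjoint_singleton_right,
        Equiv.Perm.notMem_support, ha, hx]
    have hdsupp := Equiv.Perm.Disjoint.disjoint_support hd
    constructor
    · rw [Equiv.Perm.Disjoint.cycleFactorsFinset_mul_eq_union hd,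
        (Equiv.Perm.isCycle_swap hax).cycleFactorsFinset_eq_singleton,
        Finset.card_union_of_disjoint, Finset.card_singleton]
      rw [Finset.disjoint_singleton_right]
      intro hmem
      have := Equiv.Perm.mem_cycleFactorsFinset_support_le hmem
        (by rw [Equiv.Perm.support_swap hax]; exact Finset.mem_insert_self a _)
      exact (Equiv.Perm.mem_support.1 this) ha
    · rw [Equiv.Perm.Disjoint.support_mul hd, Finset.card_union_of_disjoint hdsupp,
        Equiv.Perm.card_support_swap hax]
  · simp only [if_neg ha]
    set c := σ.cycleOf a with hc
    have hmem : c ∈ σ.cycleFactorsFinset :=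
      Equiv.Perm.cycleOf_mem_cycleFactorsFinset_iff.2 (Equiv.Perm.mem_support.2 ha)
    have hcyc : c.IsCycle := Equiv.Perm.isCycle_cycleOf σ ha
    have hca : c a = σ a := Equiv.Perm.cycleOf_apply_self σ a
    have hsupc : c.support ⊆ σ.support := Equiv.Perm.support_cycleOf_le σ a
    have hxs : x ∉ σ.support := Equiv.Perm.notMem_support.2 hx
    have hcx : c x = x := by
      rw [← Equiv.Perm.notMem_support] at hx ⊢
      exact fun h => hx (hsupc h)
    set d := σ * c⁻¹ with hd
    have hdisj : d.Disjoint c := Equiv.Perm.disjoint_mul_inv_of_mem_cycleFactorsFinset hmem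
    have hdc : d * c = σ := inv_mul_cancel_right σ c
    obtain ⟨hcyc', hsup'⟩ := isCycle_mul_swap hcyc (by rw [hca]; exact ha) hcx hax
    have hτ : σ * Equiv.swap a x = d * (c * Equiv.swap a x) := by rw [← hdc, mul_assoc]
    have hsuppσ : σ.support = d.support ∪ c.support := by
      rw [← hdc, Equiv.Perm.Disjoint.support_mul hdisj]
    have hxd : x ∉ d.support := fun h => hxs (hsuppσ ▸ Finset.mem_union_left _ h)
    have hdsupp := Equiv.Perm.Disjoint.disjoint_support hdisj
    have hdisj' : d.Disjoint (c * Equiv.swap a x) := by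
      rw [Equiv.Perm.disjoint_iff_disjoint_support, hsup']
      rw [Finset.disjoint_insert_right]
      exact ⟨hxd, hdsupp⟩
    have hcfd : d.cycleFactorsFinset = σ.cycleFactorsFinset \ {c} :=
      Equiv.Perm.cycleFactorsFinset_mul_inv_mem_eq_sdiff hmem
    have hnotmem : c * Equiv.swap a x ∉ d.cycleFactorsFinset := by
      intro h
      have := Equiv.Perm.mem_cycleFactorsFinset_support_le h
        (by rw [hsup']; exact Finset.mem_insert_self x _)
      exact hxd this
    constructor
    · rw [hτ, Equiv.Perm.Disjoint.cycleFactorsFinset_mul_eq_union hdisj',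
        hcyc'.cycleFactorsFinset_eq_singleton,
        Finset.card_union_of_disjoint (Finset.disjoint_singleton_right.2 hnotmem),
        Finset.card_singleton, hcfd, Finset.sdiff_singleton_eq_erase,
        Finset.card_erase_of_mem hmem]
      have : 0 < σ.cycleFactorsFinset.card := Finset.card_pos.2 ⟨c, hmem⟩
      omega
    · rw [hτ, Equiv.Perm.Disjoint.support_mul hdisj', hsup', Finset.union_insert, ← hsuppσ,
        Finset.card_insert_of_notMem hxs]



private lemma cc_mul_swap {n : ℕ} {σ : Equiv.Perm (Fin n)} {a x : Fin n} (hx : σ x = x)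
    (hax : a ≠ x) :
    n - cyclesCount (σ * Equiv.swap a x) = (n - cyclesCount σ) + 1 := by
  obtain ⟨h1, h2⟩ := cf_and_support_mul_swap hx hax
  have e1 := cyclesAux σ
  have e2 := cyclesAux (σ * Equiv.swap a x)
  have b1 := two_mul_card_cf_le σ
  have b2 := two_mul_card_cf_le (σ * Equiv.swap a x)
  have s1 : σ.support.card ≤ Fintype.card (Fin n) := Finset.card_le_univ _
  have s2 : (σ * Equiv.swap a x).support.card ≤ Fintype.card (Fin n) := Finset.card_le_univ _
  have hcard : Fintype.card (Fin n) = n := Fintype.card_fin n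
  unfold cyclesCount
  split_ifs at h1 h2 <;> omega

private lemma cc_eq_zero_iff {n : ℕ} {σ : Equiv.Perm (Fin n)} :
    n - cyclesCount σ = 0 ↔ σ = 1 := by
  have e1 := cyclesAux σ
  have b1 := two_mul_card_cf_le σ
  have s1 : σ.support.card ≤ Fintype.card (Fin n) := Finset.card_le_univ _
  have hcard : Fintype.card (Fin n) = n := Fintype.card_fin n
  constructor
  · intro h
    unfold cyclesCount at h
    have hs : σ.support.card = 0 := by omega
    exact Equiv.Perm.support_eq_empty_iff.1 (Finset.card_eq_zero.1 hs)
  · rintro rfl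
    have c1 : (1 : Equiv.Perm (Fin n)).cycleFactorsFinset.card = 0 := by
      simp [Equiv.Perm.cycleFactorsFinset_one]
    have s0 : (1 : Equiv.Perm (Fin n)).support.card = 0 := by
      simp [Equiv.Perm.support_one]
    unfold cyclesCount
    omega

noncomputable def PP (n : ℕ) (t : Finset (Fin n)) : MonoidAlgebra ℂ (Equiv.Perm (Fin n)) :=
  (List.ofFn fun b : Fin n => if b ∈ t then jucysMurphy n b else 1).prod

private lemma ofFn_prod_split {M : Type*} [Monoid M] : ∀ {n : ℕ} (f g : Fin n → M) (m : Fin n),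
    (∀ b : Fin n, (b : ℕ) < (m : ℕ) → f b = g b) → (∀ b : Fin n, (m : ℕ) ≤ (b : ℕ) → g b = 1) →
    (∀ b : Fin n, (m : ℕ) < (b : ℕ) → f b = 1) →
    (List.ofFn f).prod = (List.ofFn g).prod * f m := by
  intro n
  induction n with
  | zero => exact fun f g m => m.elim0
  | succ n ih =>
    intro f g m h1 h2 h3
    rw [List.ofFn_succ, List.ofFn_succ, List.prod_cons, List.prod_cons]
    rcases Fin.eq_zero_or_eq_succ m with rfl | ⟨m', rfl⟩
    · have hf : ∀ i : Fin n, f i.succ = 1 := fun i => h3 _ (by simp)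
      have hg0 : g 0 = 1 := h2 0 (le_refl 0)
      have hg : ∀ i : Fin n, g i.succ = 1 := fun i => h2 _ (by simp)
      rw [ofFn_prod_one _ hf, ofFn_prod_one _ hg, hg0, mul_one, one_mul, one_mul]
    · have h0 : f 0 = g 0 := h1 0 (by simp)
      have := ih (fun i => f i.succ) (fun i => g i.succ) m'
        (fun b hb => h1 b.succ (by simpa using Nat.succ_lt_succ hb))
        (fun b hb => h2 b.succ (by simpa using Nat.succ_le_succ hb))
        (fun b hb => h3 b.succ (by simpa using Nat.succ_lt_succ hb))
      rw [h0, this, ← mul_assoc]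

private lemma PP_insert {n : ℕ} (s : Finset (Fin n)) (m : Fin n) (hs : ∀ b ∈ s, b < m) :
    PP n (insert m s) = PP n s * jucysMurphy n m := by
  have key := ofFn_prod_split (fun b : Fin n => if b ∈ insert m s then jucysMurphy n b else 1)
      (fun b : Fin n => if b ∈ s then jucysMurphy n b else 1) m ?_ ?_ ?_
  · rw [PP, PP, key, if_pos (Finset.mem_insert_self m s)]
  · intro b hb
    have hbm : b ≠ m := fun h => by subst h; exact lt_irrefl _ hb
    simp [Finset.mem_insert, hbm]
  · intro b hb
    have : b ∉ s := fun h => absurd (hs b h) (by rw [Fin.lt_def]; omega)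
    simp [this]
  · intro b hb
    have hbm : b ≠ m := fun h => by subst h; exact lt_irrefl _ hb
    have : b ∉ s := fun h => absurd (hs b h) (by rw [Fin.lt_def]; omega)
    simp [Finset.mem_insert, hbm, this]

private lemma PP_empty {n : ℕ} : PP n ∅ = 1 :=
  ofFn_prod_one _ (fun i => if_neg (Finset.notMem_empty i))

private lemma jmEval_monomial (n : ℕ) (m : Fin n →₀ ℕ) :
    jmEval n (MvPolynomial.monomial m (1 : ℂ))
      = (List.ofFn fun b : Fin n => jucysMurphy n b ^ m b).prod := by
  rw [jmEval, MvPolynomial.support_monomial, if_neg one_ne_zero, Finset.sum_singleton,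
    MvPolynomial.coeff_monomial, if_pos rfl, one_smul]

private lemma jmEval_add (n : ℕ) (f g : MvPolynomial (Fin n) ℂ) :
    jmEval n (f + g) = jmEval n f + jmEval n g := by
  have hrep : ∀ h : MvPolynomial (Fin n) ℂ, jmEval n h
      = Finsupp.sum (AddMonoidAlgebra.coeff h) (fun m c => c • (List.ofFn fun b : Fin n => jucysMurphy n b ^ m b).prod) :=
    fun h => rfl
  rw [hrep, hrep, hrep, AddMonoidAlgebra.coeff_add]
  exact Finsupp.sum_add_index' (fun m => zero_smul ℂ _) (fun m c₁ c₂ => add_smul _ _ _)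

private lemma jmEval_sum {ι : Type*} (n : ℕ) (s : Finset ι) (F : ι → MvPolynomial (Fin n) ℂ) :
    jmEval n (∑ i ∈ s, F i) = ∑ i ∈ s, jmEval n (F i) :=
  map_sum (AddMonoidHom.mk' (jmEval n) (jmEval_add n)) F s

private lemma jmEval_esymm (n : ℕ) (j : ℕ) :
    jmEval n (MvPolynomial.esymm (Fin n) ℂ j)
      = ∑ t ∈ Finset.powersetCard j (Finset.univ : Finset (Fin n)), PP n t := by
  rw [MvPolynomial.esymm_eq_sum_monomial, jmEval_sum]
  refine Finset.sum_congr rfl fun t ht => ?_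
  rw [jmEval_monomial, PP]
  congr 1
  apply congrArg
  funext b
  have hb : (∑ i ∈ t, Finsupp.single i 1) b = if b ∈ t then 1 else 0 := by
    rw [Finset.sum_apply']
    simp [Finsupp.single_apply, Finset.sum_ite_eq']
  rw [hb]
  by_cases hbt : b ∈ t
  · simp [hbt]
  · simp [hbt]
private lemma main_induction (n : ℕ) : ∀ k : ℕ, k ≤ n → ∀ j : ℕ,
    ∑ t ∈ Finset.powersetCard j
        ((Finset.univ : Finset (Fin n)).filter fun b : Fin n => (b : ℕ) < k), PP n t
      = ∑ σ ∈ (Finset.univ : Finset (Equiv.Perm (Fin n))).filter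
            (fun σ => (∀ i : Fin n, k ≤ (i : ℕ) → σ i = i) ∧ n - cyclesCount σ = j),
          MonoidAlgebra.of ℂ (Equiv.Perm (Fin n)) σ := by
  intro k
  induction k with
  | zero =>
    intro _ j
    have hset : ((Finset.univ : Finset (Fin n)).filter fun b : Fin n => (b : ℕ) < 0) = ∅ := by simp
    rw [hset]
    rcases j with _ | j
    · have hfil : (Finset.univ : Finset (Equiv.Perm (Fin n))).filter
          (fun σ => (∀ i : Fin n, 0 ≤ (i : ℕ) → σ i = i) ∧ n - cyclesCount σ = 0) = {1} := by
        ext σ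
        simp only [Finset.mem_filter, Finset.mem_univ, true_and, Finset.mem_singleton]
        constructor
        · rintro ⟨hfix, -⟩
          exact Equiv.ext fun i => hfix i (Nat.zero_le _)
        · rintro rfl
          exact ⟨fun i _ => rfl, cc_eq_zero_iff.2 rfl⟩
      rw [hfil, Finset.powersetCard_zero, Finset.sum_singleton, Finset.sum_singleton,
        PP_empty, map_one]
    · have h1 : Finset.powersetCard (j + 1) (∅ : Finset (Fin n)) = ∅ := by
        ext t
        simp only [Finset.mem_powersetCard, Finset.subset_empty, Finset.notMem_empty,
          iff_false, not_and]
        rintro rfl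
        simp
      have h2 : (Finset.univ : Finset (Equiv.Perm (Fin n))).filter
          (fun σ => (∀ i : Fin n, 0 ≤ (i : ℕ) → σ i = i) ∧ n - cyclesCount σ = j + 1) = ∅ := by
        refine Finset.eq_empty_of_forall_notMem fun σ hσ => ?_
        obtain ⟨hfix, hcc⟩ := (Finset.mem_filter.1 hσ).2
        have hone : σ = 1 := Equiv.ext fun i => hfix i (Nat.zero_le _)
        subst hone
        have h0 : n - cyclesCount (1 : Equiv.Perm (Fin n)) = 0 := cc_eq_zero_iff.2 rfl
        omega
      rw [h1, h2, Finset.sum_empty, Finset.sum_empty]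
  | succ k ih =>
    intro hk j
    have hkn : k < n := Nat.lt_of_lt_of_le (Nat.lt_succ_self k) hk
    set m : Fin n := ⟨k, hkn⟩ with hmdef
    have hmval : (m : ℕ) = k := rfl
    have hsetk : ((Finset.univ : Finset (Fin n)).filter fun b : Fin n => (b : ℕ) < k + 1)
        = insert m ((Finset.univ : Finset (Fin n)).filter fun b : Fin n => (b : ℕ) < k) := by
      ext b
      simp only [Finset.mem_filter, Finset.mem_univ, true_and, Finset.mem_insert,
        Fin.ext_iff, hmval]
      omega
    have hmnot : m ∉ (Finset.univ : Finset (Fin n)).filter fun b : Fin n => (b : ℕ) < k := by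
      simp [hmval]
    have hsplit : ∀ σ : Equiv.Perm (Fin n), ((∀ i : Fin n, k ≤ (i : ℕ) → σ i = i)
        ↔ ((∀ i : Fin n, k + 1 ≤ (i : ℕ) → σ i = i) ∧ σ m = m)) := by
      intro σ
      constructor
      · intro h
        exact ⟨fun i hi => h i (Nat.le_of_succ_le hi), h m (le_of_eq hmval.symm)⟩
      · rintro ⟨h1, h2⟩ i hi
        rcases Nat.eq_or_lt_of_le hi with he | hl
        · have hi' : i = m := Fin.ext (by omega)
          rw [hi']; exact h2
        · exact h1 i hl
    rcases j with _ | j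
    · rw [Finset.powersetCard_zero, Finset.sum_singleton, PP_empty]
      have hfil : (Finset.univ : Finset (Equiv.Perm (Fin n))).filter
          (fun σ => (∀ i : Fin n, k + 1 ≤ (i : ℕ) → σ i = i) ∧ n - cyclesCount σ = 0)
          = {1} := by
        ext σ
        simp only [Finset.mem_filter, Finset.mem_univ, true_and, Finset.mem_singleton]
        constructor
        · rintro ⟨-, hcc⟩
          exact cc_eq_zero_iff.1 hcc
        · rintro rfl
          exact ⟨fun i _ => rfl, cc_eq_zero_iff.2 rfl⟩
      rw [hfil, Finset.sum_singleton, map_one]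
    · rw [hsetk, Finset.powersetCard_succ_insert hmnot]
      have hdisj : Disjoint
          (Finset.powersetCard (j + 1)
            ((Finset.univ : Finset (Fin n)).filter fun b : Fin n => (b : ℕ) < k))
          ((Finset.powersetCard j
            ((Finset.univ : Finset (Fin n)).filter fun b : Fin n => (b : ℕ) < k)).image
              (insert m)) := by
        rw [Finset.disjoint_left]
        intro t ht hti
        obtain ⟨s, hs, rfl⟩ := Finset.mem_image.1 hti
        exact hmnot ((Finset.mem_powersetCard.1 ht).1 (Finset.mem_insert_self m s))
      rw [Finset.sum_union hdisj]
      have himg : ∑ t ∈ (Finset.powersetCard j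
            ((Finset.univ : Finset (Fin n)).filter fun b : Fin n => (b : ℕ) < k)).image (insert m),
            PP n t
          = ∑ s ∈ Finset.powersetCard j
              ((Finset.univ : Finset (Fin n)).filter fun b : Fin n => (b : ℕ) < k),
              PP n (insert m s) := by
        refine Finset.sum_image ?_
        intro s1 h1 s2 h2 heq
        have hm1 : m ∉ s1 := fun h => hmnot ((Finset.mem_powersetCard.1 h1).1 h)
        have hm2 : m ∉ s2 := fun h => hmnot ((Finset.mem_powersetCard.1 h2).1 h)
        rw [← Finset.erase_insert hm1, ← Finset.erase_insert hm2, heq]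
      rw [himg]
      have hPP : ∀ s ∈ Finset.powersetCard j
          ((Finset.univ : Finset (Fin n)).filter fun b : Fin n => (b : ℕ) < k),
          PP n (insert m s) = PP n s * jucysMurphy n m := by
        intro s hs
        refine PP_insert s m fun b hb => ?_
        have hbk := (Finset.mem_filter.1 ((Finset.mem_powersetCard.1 hs).1 hb)).2
        rw [Fin.lt_def, hmval]
        exact hbk
      rw [Finset.sum_congr rfl hPP, ← Finset.sum_mul, ih (Nat.le_of_succ_le hk) (j + 1),
        ih (Nat.le_of_succ_le hk) j]
      have eq1 : (Finset.univ : Finset (Equiv.Perm (Fin n))).filter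
            (fun σ => (∀ i : Fin n, k ≤ (i : ℕ) → σ i = i) ∧ n - cyclesCount σ = j + 1)
          = ((Finset.univ : Finset (Equiv.Perm (Fin n))).filter
              (fun σ => (∀ i : Fin n, k + 1 ≤ (i : ℕ) → σ i = i)
                ∧ n - cyclesCount σ = j + 1)).filter (fun σ => σ m = m) := by
        rw [Finset.filter_filter]
        refine Finset.filter_congr fun σ _ => ?_
        rw [hsplit σ]
        tauto
      have eq2 : (∑ σ ∈ (Finset.univ : Finset (Equiv.Perm (Fin n))).filter
              (fun σ => (∀ i : Fin n, k ≤ (i : ℕ) → σ i = i) ∧ n - cyclesCount σ = j),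
            MonoidAlgebra.of ℂ (Equiv.Perm (Fin n)) σ) * jucysMurphy n m
          = ∑ τ ∈ ((Finset.univ : Finset (Equiv.Perm (Fin n))).filter
              (fun σ => (∀ i : Fin n, k + 1 ≤ (i : ℕ) → σ i = i)
                ∧ n - cyclesCount σ = j + 1)).filter (fun σ => ¬ σ m = m),
            MonoidAlgebra.of ℂ (Equiv.Perm (Fin n)) τ := by
        unfold jucysMurphy
        rw [Finset.sum_mul_sum, ← Finset.sum_product']
        refine Finset.sum_nbij' (fun p => p.1 * Equiv.swap p.2 m)
          (fun τ => (τ * Equiv.swap (τ⁻¹ m) m, τ⁻¹ m)) ?_ ?_ ?_ ?_ ?_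
        · rintro ⟨σ, a⟩ hp
          rw [Finset.mem_product] at hp
          obtain ⟨hp1, hp2⟩ := hp
          obtain ⟨-, hfix, hcc⟩ := Finset.mem_filter.1 hp1
          have ha : a < m := (Finset.mem_filter.1 hp2).2
          have hav : (a : ℕ) < k := by rw [Fin.lt_def, hmval] at ha; exact ha
          have hσm : σ m = m := hfix m (le_of_eq hmval.symm)
          have ham : a ≠ m := ne_of_lt ha
          simp only [Finset.mem_filter, Finset.mem_univ, true_and]
          refine ⟨⟨fun i hi => ?_, ?_⟩, ?_⟩
          · have hia : i ≠ a := fun h => by rw [h] at hi; omega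
            have him : i ≠ m := fun h => by rw [h] at hi; omega
            rw [Equiv.Perm.mul_apply, Equiv.swap_apply_of_ne_of_ne hia him]
            exact hfix i (Nat.le_of_succ_le hi)
          · rw [cc_mul_swap hσm ham, hcc]
          · have hσa : σ a ≠ m := fun h => ham (σ.injective (h.trans hσm.symm))
            rw [Equiv.Perm.mul_apply, Equiv.swap_apply_right]
            exact hσa
        · intro τ hτ
          obtain ⟨hτ1, hne⟩ := Finset.mem_filter.1 hτ
          obtain ⟨-, hfix, hcc⟩ := Finset.mem_filter.1 hτ1
          have haa : τ (τ⁻¹ m) = m := Equiv.apply_symm_apply τ m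
          have ham : τ⁻¹ m ≠ m := fun h => hne (by rw [h] at haa; exact haa)
          have hak : ((τ⁻¹ m : Fin n) : ℕ) < k := by
            by_contra hcon
            push_neg at hcon
            have hne2 : ((τ⁻¹ m : Fin n) : ℕ) ≠ k := fun h => ham (Fin.ext (h.trans hmval.symm))
            have hfa := hfix (τ⁻¹ m) (by omega)
            exact ham (hfa.symm.trans haa)
          have hσm : (τ * Equiv.swap (τ⁻¹ m) m) m = m := by
            rw [Equiv.Perm.mul_apply, Equiv.swap_apply_right]
            exact haa
          rw [Finset.mem_product]
          constructor
          · simp only [Finset.mem_filter, Finset.mem_univ, true_and]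
            constructor
            · intro i hi
              by_cases him : i = m
              · rw [him]; exact hσm
              · have hik : k + 1 ≤ (i : ℕ) := by
                  have : (i : ℕ) ≠ k := fun h => him (Fin.ext (h.trans hmval.symm))
                  omega
                have hia : i ≠ τ⁻¹ m := fun h => by rw [h] at hi; omega
                rw [Equiv.Perm.mul_apply, Equiv.swap_apply_of_ne_of_ne hia him]
                exact hfix i hik
            · have hback : τ = (τ * Equiv.swap (τ⁻¹ m) m) * Equiv.swap (τ⁻¹ m) m := by
                rw [mul_assoc, Equiv.swap_mul_self, mul_one]
              have := cc_mul_swap hσm ham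
              rw [← hback, hcc] at this
              omega
          · simp only [Finset.mem_filter, Finset.mem_univ, true_and]
            rw [Fin.lt_def, hmval]
            exact hak
        · rintro ⟨σ, a⟩ hp
          rw [Finset.mem_product] at hp
          obtain ⟨hp1, hp2⟩ := hp
          obtain ⟨-, hfix, hcc⟩ := Finset.mem_filter.1 hp1
          have hσm : σ m = m := hfix m (le_of_eq hmval.symm)
          have hτa : (σ * Equiv.swap a m) a = m := by
            rw [Equiv.Perm.mul_apply, Equiv.swap_apply_left]
            exact hσm
          have hainv : (σ * Equiv.swap a m)⁻¹ m = a := by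
            apply (σ * Equiv.swap a m).injective
            rw [show ∀ (e : Equiv.Perm (Fin n)) (y : Fin n), e (e⁻¹ y) = y from
              fun e y => e.apply_symm_apply y, hτa]
          simp only [hainv]
          rw [mul_assoc, Equiv.swap_mul_self, mul_one]
        · intro τ hτ
          simp only
          rw [mul_assoc, Equiv.swap_mul_self, mul_one]
        · rintro ⟨σ, a⟩ hp
          exact (map_mul (MonoidAlgebra.of ℂ (Equiv.Perm (Fin n))) σ (Equiv.swap a m)).symm
      rw [eq1, eq2]
      exact Finset.sum_filter_add_sum_filter_not _ _ _


/-- The `j`-th elementary symmetric polynomial of the Jucys–Murphy elements equals the sum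
of all permutations `σ` with `n − c(σ) = j`, where `c(σ)` is the number of cycles of `σ`. -/
theorem esymm_jucysMurphy (n : ℕ) (hn : 1 ≤ n) (j : ℕ) (hj : j ≤ n) :
    jmEval n (MvPolynomial.esymm (Fin n) ℂ j) =
      ∑ σ ∈ Finset.univ.filter (fun σ : Equiv.Perm (Fin n) => n - cyclesCount σ = j),
        MonoidAlgebra.of ℂ (Equiv.Perm (Fin n)) σ := by
  rw [jmEval_esymm]
  have huniv : ((Finset.univ : Finset (Fin n)).filter fun b : Fin n => (b : ℕ) < n)
      = (Finset.univ : Finset (Fin n)) := by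
    refine Finset.filter_true_of_mem fun b _ => b.isLt
  have hmain := main_induction n n le_rfl j
  rw [huniv] at hmain
  rw [hmain]
  refine Finset.sum_congr (Finset.filter_congr fun σ _ => ?_) fun _ _ => rfl
  constructor
  · exact fun h => h.2
  · exact fun h => ⟨fun i hi => absurd i.isLt (not_lt.2 hi), h⟩
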